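/- Let G = (V, E) be a finite simple graph and f : 2^E → ℝ≥0 normalized, monotone, submodular, with b, k positive integers. Let F_grd ⊆ E be obtained by min(b,k) steps of greedy edge selection (each step adding an edge maximizing marginal gain of f). Then F_grd satisfies |F_grd| ≤ k, admits a vertex cover of size at most b, and f(F_grd) ≥ (1 - exp(-min{b,k}/k)) · OPT₁, where OPT₁ = max { f(F) : F ⊆ E, |F| ≤ k, ∃ vertex cover C of F with |C| ≤ b }. -/

import Mathlib

open Finset
open scoped Classical

variable {V : Type*} [Fintype V] [DecidableEq V]

/-- The set of edges of `G` incident to at least one vertex of `S`. -/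
def edgesOf (G : SimpleGraph V) [DecidableRel G.Adj] (S : Finset V) : Finset (Sym2 V) :=
  G.edgeFinset.filter (fun e => ∃ v ∈ S, v ∈ e)

/-- `C` is a vertex cover of the edge set `F`. -/
def IsVertexCover (C : Finset V) (F : Finset (Sym2 V)) : Prop :=
  ∀ e ∈ F, ∃ v ∈ C, v ∈ e

/-- `gF G f k S`: maximum of `f F` over `F ⊆ edgesOf G S` with `|F| ≤ k` (inner problem of P₂). -/
noncomputable def gF (G : SimpleGraph V) [DecidableRel G.Adj] (f : Finset (Sym2 V) → ℝ)
    (k : ℕ) (S : Finset V) : ℝ :=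
  ((edgesOf G S).powerset.filter (fun F => F.card ≤ k)).sup' ⟨∅, by simp⟩ f

/-- Optimal value of problem P₁: maximize `f F` over `F ⊆ E` with `|F| ≤ k` admitting a
vertex cover of size at most `b`. -/
noncomputable def OPT1 (G : SimpleGraph V) [DecidableRel G.Adj] (f : Finset (Sym2 V) → ℝ)
    (k b : ℕ) : ℝ :=
  (G.edgeFinset.powerset.filter
      (fun F => F.card ≤ k ∧ ∃ C : Finset V, C.card ≤ b ∧ IsVertexCover C F)).sup'
    ⟨∅, by
      refine mem_filter.mpr ⟨mem_powerset.mpr (empty_subset _), by simp, ⟨∅, by simp, ?_⟩⟩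
      intro e he
      exact absurd he (Finset.notMem_empty e)⟩ f

/-- Optimal value of problem P₂: maximize `gF G f k S` over `S ⊆ V` with `|S| ≤ b`. -/
noncomputable def OPT2 (G : SimpleGraph V) [DecidableRel G.Adj] (f : Finset (Sym2 V) → ℝ)
    (k b : ℕ) : ℝ :=
  ((univ : Finset V).powerset.filter (fun S => S.card ≤ b)).sup' ⟨∅, by simp⟩ (gF G f k)

set_option linter.unusedSectionVars false in

lemma marginal_bound (f : Finset (Sym2 V) → ℝ)
    (hsub : ∀ A B : Finset (Sym2 V), f A + f B ≥ f (A ∪ B) + f (A ∩ B))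
    (S T : Finset (Sym2 V)) :
    f (S ∪ T) ≤ f T + ∑ e ∈ S \ T, (f (insert e T) - f T) := by
  induction S using Finset.induction_on with
  | empty => simp
  | @insert e S heS ih =>
    rw [Finset.insert_union]
    by_cases heT : e ∈ T
    · rw [Finset.insert_eq_self.mpr (Finset.mem_union_right S heT),
        Finset.insert_sdiff_of_mem S heT]
      exact ih
    · rw [Finset.insert_sdiff_of_notMem S heT,
        Finset.sum_insert (by simp [heS])]
      have heST : e ∉ S ∪ T := by simp [heS, heT]
      have hcap : insert e T ∩ (S ∪ T) = T := by
        rw [Finset.insert_inter_of_notMem heST,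
          Finset.inter_eq_left.mpr (Finset.subset_union_right)]
      have hcup : insert e T ∪ (S ∪ T) = insert e (S ∪ T) := by
        rw [Finset.insert_union, Finset.union_comm T, Finset.union_assoc, Finset.union_self]
      have := hsub (insert e T) (S ∪ T)
      rw [hcap, hcup] at this
      linarith

/-- Edge-Greedy guarantee. `min(b,k)` steps of greedy edge selection yield a
set `F_grd` with `|F_grd| ≤ k`, a vertex cover of size at most `b`, and
`f(F_grd) ≥ (1 - exp(-min{b,k}/k)) · OPT₁`. -/
theorem stmt_19 (G : SimpleGraph V) [DecidableRel G.Adj] (f : Finset (Sym2 V) → ℝ)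
    (hnn : ∀ F, 0 ≤ f F) (hnorm : f ∅ = 0)
    (hmono : ∀ A B : Finset (Sym2 V), A ⊆ B → f A ≤ f B)
    (hsub : ∀ A B : Finset (Sym2 V), f A + f B ≥ f (A ∪ B) + f (A ∩ B))
    (b k : ℕ) (hb : 0 < b) (hk : 0 < k)
    (A : ℕ → Finset (Sym2 V)) (hA0 : A 0 = ∅)
    (hstep : ∀ i < min b k, ∃ e ∈ G.edgeFinset \ A i, A (i + 1) = insert e (A i) ∧
      ∀ e' ∈ G.edgeFinset \ A i, f (insert e' (A i)) ≤ f (insert e (A i)))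
    (Fgrd : Finset (Sym2 V)) (hFgrd : Fgrd = A (min b k)) :
    Fgrd.card ≤ k ∧
    (∃ C : Finset V, IsVertexCover C Fgrd ∧ C.card ≤ b) ∧
    f Fgrd ≥ (1 - Real.exp (-((min b k : ℕ) : ℝ) / k)) * OPT1 G f k b := by
  set t := min b k with ht
  -- cardinality bound
  have hcard : ∀ i ≤ t, (A i).card ≤ i := by
    intro i hi
    induction i with
    | zero => simp [hA0]
    | succ n ih =>
      obtain ⟨e, _, hAe, _⟩ := hstep n (by omega)
      rw [hAe]
      have := ih (by omega)
      calc (insert e (A n)).card ≤ (A n).card + 1 := Finset.card_insert_le _ _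
        _ ≤ n + 1 := by omega
  have hFcard : Fgrd.card ≤ t := by rw [hFgrd]; exact hcard t le_rfl
  refine ⟨le_trans hFcard (min_le_right b k), ?_, ?_⟩
  · -- vertex cover
    refine ⟨Fgrd.image (fun e : Sym2 V => e.out.1), ?_, ?_⟩
    · intro e he
      exact ⟨e.out.1, Finset.mem_image_of_mem _ he, Sym2.out_fst_mem e⟩
    · calc (Fgrd.image _).card ≤ Fgrd.card := Finset.card_image_le
        _ ≤ b := le_trans hFcard (min_le_left b k)
  · -- approximation bound
    obtain ⟨Fs, hFsmem, hOPT⟩ := Finset.exists_mem_eq_sup'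
      (⟨∅, by
        refine mem_filter.mpr ⟨mem_powerset.mpr (empty_subset _), by simp, ⟨∅, by simp, ?_⟩⟩
        intro e he
        exact absurd he (Finset.notMem_empty e)⟩ :
        (G.edgeFinset.powerset.filter
          (fun F => F.card ≤ k ∧ ∃ C : Finset V, C.card ≤ b ∧ IsVertexCover C F)).Nonempty) f
    rw [Finset.mem_filter, Finset.mem_powerset] at hFsmem
    obtain ⟨hFsE, hFsk, -⟩ := hFsmem
    have hOPTeq : OPT1 G f k b = f Fs := hOPT
    have hkR : (0:ℝ) < (k:ℝ) := by exact_mod_cast hk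
    -- per step inequality
    have key : ∀ i < t, f Fs - f (A (i+1)) ≤ (1 - 1/(k:ℝ)) * (f Fs - f (A i)) := by
      intro i hi
      obtain ⟨e, he, hAe, hmax⟩ := hstep i hi
      have hgain : 0 ≤ f (A (i+1)) - f (A i) := by
        rw [hAe]
        have := hmono (A i) (insert e (A i)) (Finset.subset_insert _ _)
        linarith
      have hsum : f Fs ≤ f (A i) + ((Fs \ A i).card : ℝ) * (f (A (i+1)) - f (A i)) := by
        have h1 : f Fs ≤ f (Fs ∪ A i) := hmono _ _ Finset.subset_union_left
        have h2 := marginal_bound f hsub Fs (A i)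
        have hterm : ∀ e' ∈ Fs \ A i, f (insert e' (A i)) - f (A i) ≤
            f (A (i+1)) - f (A i) := by
          intro e' he'
          have hmem : e' ∈ G.edgeFinset \ A i := by
            rw [Finset.mem_sdiff] at he' ⊢
            exact ⟨hFsE he'.1, he'.2⟩
          have := hmax e' hmem
          rw [hAe]
          linarith
        have h3 : ∑ e' ∈ Fs \ A i, (f (insert e' (A i)) - f (A i)) ≤
            ((Fs \ A i).card : ℝ) * (f (A (i+1)) - f (A i)) := by
          have := Finset.sum_le_card_nsmul (Fs \ A i) _ _ hterm
          rwa [nsmul_eq_mul] at this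
        linarith
      have hcardle : ((Fs \ A i).card : ℝ) ≤ (k:ℝ) := by
        have : (Fs \ A i).card ≤ Fs.card := Finset.card_le_card (Finset.sdiff_subset)
        exact_mod_cast le_trans this hFsk
      have hgain2 : f Fs - f (A i) ≤ (k:ℝ) * (f (A (i+1)) - f (A i)) := by
        nlinarith [hnn (A i)]
      have h4 : (1/(k:ℝ)) * (f Fs - f (A i)) ≤ f (A (i+1)) - f (A i) := by
        rw [div_mul_eq_mul_div, one_mul, div_le_iff₀ hkR]
        nlinarith
      nlinarith
    -- induction
    have hind : ∀ i ≤ t, f Fs - f (A i) ≤ (1 - 1/(k:ℝ))^i * f Fs := by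
      intro i hi
      induction i with
      | zero => simp [hA0, hnorm]
      | succ n ih =>
        have h1 := key n (by omega)
        have h2 := ih (by omega)
        have hfac : (0:ℝ) ≤ 1 - 1/(k:ℝ) := by
          rw [sub_nonneg, div_le_one hkR]
          exact_mod_cast hk
        calc f Fs - f (A (n+1)) ≤ (1 - 1/(k:ℝ)) * (f Fs - f (A n)) := h1
          _ ≤ (1 - 1/(k:ℝ)) * ((1 - 1/(k:ℝ))^n * f Fs) := by
              exact mul_le_mul_of_nonneg_left h2 hfac
          _ = (1 - 1/(k:ℝ))^(n+1) * f Fs := by ring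
    have hfinal := hind t le_rfl
    have hexp : (1 - 1/(k:ℝ))^t ≤ Real.exp (-(t:ℝ)/k) := by
      have h1 : 1 - 1/(k:ℝ) ≤ Real.exp (-(1/(k:ℝ))) := by
        have := Real.add_one_le_exp (-(1/(k:ℝ)))
        linarith
      have hfac : (0:ℝ) ≤ 1 - 1/(k:ℝ) := by
        rw [sub_nonneg, div_le_one hkR]
        exact_mod_cast hk
      calc (1 - 1/(k:ℝ))^t ≤ (Real.exp (-(1/(k:ℝ))))^t := pow_le_pow_left₀ hfac h1 t
        _ = Real.exp ((t:ℝ) * (-(1/(k:ℝ)))) := (Real.exp_nat_mul _ t).symm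
        _ = Real.exp (-(t:ℝ)/k) := by ring_nf
    have hfs : 0 ≤ f Fs := hnn Fs
    rw [hFgrd, hOPTeq, ge_iff_le]
    nlinarith [mul_le_mul_of_nonneg_right hexp hfs]
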